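/- In a Cartesian tangent category, for any differential object A (a differential bundle over the terminal object 1), the principal projection p̂ : T(A) → A is a vertical connection on this differential bundle, and moreover it is the unique vertical connection on this bundle. -/

import Mathlib

open CategoryTheory CategoryTheory.Limits

open scoped Classical

universe v u

variable {C : Type u} [Category.{v} C]

/-- Chosen pullback: explicit pullback data for a cospan `f : A ⟶ Z ⟵ B : g`. -/
structure ChosenPB {A B Z : C} (f : A ⟶ Z) (g : B ⟶ Z) where
  P : C
  pr0 : P ⟶ A
  pr1 : P ⟶ B
  comm : pr0 ≫ f = pr1 ≫ g
  pair : ∀ {X : C} (u : X ⟶ A) (v : X ⟶ B), u ≫ f = v ≫ g → (X ⟶ P)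
  pair_pr0 : ∀ {X : C} (u : X ⟶ A) (v : X ⟶ B) (h : u ≫ f = v ≫ g),
    pair u v h ≫ pr0 = u
  pair_pr1 : ∀ {X : C} (u : X ⟶ A) (v : X ⟶ B) (h : u ≫ f = v ≫ g),
    pair u v h ≫ pr1 = v
  hom_ext : ∀ {X : C} (w w' : X ⟶ P),
    w ≫ pr0 = w' ≫ pr0 → w ≫ pr1 = w' ≫ pr1 → w = w'

/-- Witness that the endofunctor `T` preserves the chosen pullback `PB`. -/
structure PBLift (T : C ⥤ C) {A B Z : C} {f : A ⟶ Z} {g : B ⟶ Z} (PB : ChosenPB f g) where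
  pair : ∀ {X : C} (u : X ⟶ T.obj A) (v : X ⟶ T.obj B),
    u ≫ T.map f = v ≫ T.map g → (X ⟶ T.obj PB.P)
  pair_pr0 : ∀ {X : C} (u : X ⟶ T.obj A) (v : X ⟶ T.obj B)
    (h : u ≫ T.map f = v ≫ T.map g), pair u v h ≫ T.map PB.pr0 = u
  pair_pr1 : ∀ {X : C} (u : X ⟶ T.obj A) (v : X ⟶ T.obj B)
    (h : u ≫ T.map f = v ≫ T.map g), pair u v h ≫ T.map PB.pr1 = v
  hom_ext : ∀ {X : C} (w w' : X ⟶ T.obj PB.P),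
    w ≫ T.map PB.pr0 = w' ≫ T.map PB.pr0 → w ≫ T.map PB.pr1 = w' ≫ T.map PB.pr1 → w = w'

/-- The image of a preserved chosen pullback is again a chosen pullback. -/
def PBLift.toChosenPB {T : C ⥤ C} {A B Z : C} {f : A ⟶ Z} {g : B ⟶ Z} {PB : ChosenPB f g}
    (L : PBLift T PB) : ChosenPB (T.map f) (T.map g) where
  P := T.obj PB.P
  pr0 := T.map PB.pr0
  pr1 := T.map PB.pr1
  comm := by rw [← T.map_comp, ← T.map_comp, PB.comm]
  pair := L.pair
  pair_pr0 := L.pair_pr0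
  pair_pr1 := L.pair_pr1
  hom_ext := L.hom_ext

/-- Iterated endofunctor `Tⁿ`. -/
def fpow (T : C ⥤ C) : ℕ → C ⥤ C
  | 0 => 𝟭 C
  | n + 1 => fpow T n ⋙ T

/-- A tangent category in the sense of Cockett–Cruttwell, presented with chosen
pullbacks `T₂M` of `p_M` along itself (preserved by each `Tⁿ`), addition `+`,
projection `p`, zero `0`, vertical lift `ℓ` and canonical flip `c`, together
with the universality of the vertical lift. Sums, associativity etc. are
expressed in generalized-element form via the chosen pullback pairings. -/
structure TangentCat (C : Type u) [Category.{v} C] where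
  T : C ⥤ C
  p : T ⟶ 𝟭 C
  zero : 𝟭 C ⟶ T
  l : T ⟶ T ⋙ T
  c : T ⋙ T ⟶ T ⋙ T
  T2 : ∀ M : C, ChosenPB (p.app M) (p.app M)
  T2T : ∀ M : C, PBLift T (T2 M)
  T2Tn : ∀ (M : C) (n : ℕ), PBLift (fpow T n) (T2 M)
  add : ∀ M : C, (T2 M).P ⟶ T.obj M
  add_nat : ∀ {M N : C} (f : M ⟶ N) {X : C} (u v : X ⟶ T.obj M)
    (h : u ≫ p.app M = v ≫ p.app M)
    (h' : (u ≫ T.map f) ≫ p.app N = (v ≫ T.map f) ≫ p.app N),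
    (T2 M).pair u v h ≫ add M ≫ T.map f
      = (T2 N).pair (u ≫ T.map f) (v ≫ T.map f) h' ≫ add N
  zero_p : ∀ M : C, zero.app M ≫ p.app M = 𝟙 M
  add_p : ∀ M : C, add M ≫ p.app M = (T2 M).pr0 ≫ p.app M
  add_comm' : ∀ (M : C) {X : C} (f g : X ⟶ T.obj M) (h : f ≫ p.app M = g ≫ p.app M),
    (T2 M).pair f g h ≫ add M = (T2 M).pair g f h.symm ≫ add M
  add_assoc' : ∀ (M : C) {X : C} (f g k : X ⟶ T.obj M)
    (h1 : f ≫ p.app M = g ≫ p.app M) (h2 : g ≫ p.app M = k ≫ p.app M)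
    (h3 : ((T2 M).pair f g h1 ≫ add M) ≫ p.app M = k ≫ p.app M)
    (h4 : f ≫ p.app M = ((T2 M).pair g k h2 ≫ add M) ≫ p.app M),
    (T2 M).pair ((T2 M).pair f g h1 ≫ add M) k h3 ≫ add M
      = (T2 M).pair f ((T2 M).pair g k h2 ≫ add M) h4 ≫ add M
  add_zero' : ∀ (M : C) {X : C} (f : X ⟶ T.obj M)
    (h : f ≫ p.app M = (f ≫ p.app M ≫ zero.app M) ≫ p.app M),
    (T2 M).pair f (f ≫ p.app M ≫ zero.app M) h ≫ add M = f
  l_Tp : ∀ M : C, l.app M ≫ T.map (p.app M) = p.app M ≫ zero.app M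
  l_zero : ∀ M : C, zero.app M ≫ l.app M = zero.app M ≫ T.map (zero.app M)
  l_add : ∀ (M : C) {X : C} (f g : X ⟶ T.obj M) (h : f ≫ p.app M = g ≫ p.app M),
    ∃ w : X ⟶ T.obj (T2 M).P,
      w ≫ T.map (T2 M).pr0 = f ≫ l.app M ∧ w ≫ T.map (T2 M).pr1 = g ≫ l.app M ∧
      (T2 M).pair f g h ≫ add M ≫ l.app M = w ≫ T.map (add M)
  c_p : ∀ M : C, c.app M ≫ p.app (T.obj M) = T.map (p.app M)
  c_zero : ∀ M : C, T.map (zero.app M) ≫ c.app M = zero.app (T.obj M)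
  c_add : ∀ (M : C) {X : C} (u v : X ⟶ T.obj (T.obj M))
    (h : u ≫ T.map (p.app M) = v ≫ T.map (p.app M))
    (h' : (u ≫ c.app M) ≫ p.app (T.obj M) = (v ≫ c.app M) ≫ p.app (T.obj M)),
    ∃ w : X ⟶ T.obj (T2 M).P,
      w ≫ T.map (T2 M).pr0 = u ∧ w ≫ T.map (T2 M).pr1 = v ∧
      w ≫ T.map (add M) ≫ c.app M
        = (T2 (T.obj M)).pair (u ≫ c.app M) (v ≫ c.app M) h' ≫ add (T.obj M)
  l_c : ∀ M : C, l.app M ≫ c.app M = l.app M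
  c_c : ∀ M : C, c.app M ≫ c.app M = 𝟙 (T.obj (T.obj M))
  l_l : ∀ M : C, l.app M ≫ T.map (l.app M) = l.app M ≫ l.app (T.obj M)
  c_T_c : ∀ M : C, c.app (T.obj M) ≫ T.map (c.app M) ≫ c.app (T.obj M)
    = T.map (c.app M) ≫ c.app (T.obj M) ≫ T.map (c.app M)
  l_T_c : ∀ M : C, l.app (T.obj M) ≫ T.map (c.app M) ≫ c.app (T.obj M)
    = c.app M ≫ T.map (l.app M)
  vmu : ∀ M : C, (T2 M).P ⟶ T.obj (T.obj M)
  vmu_spec : ∀ M : C, ∃ w : (T2 M).P ⟶ T.obj (T2 M).P,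
    w ≫ T.map (T2 M).pr0 = (T2 M).pr0 ≫ l.app M ∧
    w ≫ T.map (T2 M).pr1 = (T2 M).pr1 ≫ zero.app (T.obj M) ∧
    vmu M = w ≫ T.map (add M)
  vlift : ∀ {X M : C} (f : X ⟶ T.obj (T.obj M)),
    f ≫ T.map (p.app M) = f ≫ T.map (p.app M) ≫ p.app M ≫ zero.app M → (X ⟶ (T2 M).P)
  vlift_vmu : ∀ {X M : C} (f : X ⟶ T.obj (T.obj M))
    (h : f ≫ T.map (p.app M) = f ≫ T.map (p.app M) ≫ p.app M ≫ zero.app M),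
    vlift f h ≫ vmu M = f
  vmu_mono : ∀ {X M : C} (w w' : X ⟶ (T2 M).P), w ≫ vmu M = w' ≫ vmu M → w = w'

/-- Negatives: each tangent bundle is a commutative group bundle. -/
structure HasNegatives {C : Type u} [Category.{v} C] (D : TangentCat C) where
  neg : ∀ M : C, D.T.obj M ⟶ D.T.obj M
  neg_p : ∀ M : C, neg M ≫ D.p.app M = D.p.app M
  neg_add : ∀ (M : C) {X : C} (f : X ⟶ D.T.obj M)
    (h : f ≫ D.p.app M = (f ≫ neg M) ≫ D.p.app M),
    (D.T2 M).pair f (f ≫ neg M) h ≫ D.add M = f ≫ D.p.app M ≫ D.zero.app M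

/-- Fibrewise sum of two maps into a tangent bundle (defined when the maps
agree under `p`; otherwise a default value). -/
noncomputable def TangentCat.hadd (D : TangentCat C) {X M : C}
    (f g : X ⟶ D.T.obj M) : X ⟶ D.T.obj M :=
  if h : f ≫ D.p.app M = g ≫ D.p.app M then (D.T2 M).pair f g h ≫ D.add M else f

/-- Fibrewise difference `f - g` of two maps into a tangent bundle. -/
noncomputable def TangentCat.sub (D : TangentCat C) (N : HasNegatives D) {X M : C}
    (f g : X ⟶ D.T.obj M) : X ⟶ D.T.obj M :=
  D.hadd f (g ≫ N.neg M)

/-- The bracketing operation `{f}` for the tangent bundle, obtained from the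
universality (equalizer property) of the vertical lift. -/
noncomputable def TangentCat.brkT (D : TangentCat C) {X M : C}
    (f : X ⟶ D.T.obj (D.T.obj M)) : X ⟶ D.T.obj M :=
  if h : f ≫ D.T.map (D.p.app M) = f ≫ D.T.map (D.p.app M) ≫ D.p.app M ≫ D.zero.app M
  then D.vlift f h ≫ (D.T2 M).pr0 else f ≫ D.p.app (D.T.obj M)

/-- The Lie bracket of vector fields: `[w₁,w₂] = {w₁T(w₂) − w₂T(w₁)c}`. -/
noncomputable def TangentCat.lie (D : TangentCat C) (N : HasNegatives D) {M : C}
    (w1 w2 : M ⟶ D.T.obj M) : M ⟶ D.T.obj M :=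
  D.brkT (D.sub N (w1 ≫ D.T.map w2) (w2 ≫ D.T.map w1 ≫ D.c.app M))

/-- A differential bundle `𝗊 = (q, +_q, 0_q, λ)` on `E` over `M` in the tangent
category `D`, with chosen pullbacks `E₂` (of `q` along itself) and
`T(M) ×_M E` (of `p_M` along `q`), both preserved by each `Tⁿ`, together with
the lift axioms and the universality of the lift (in equalizer form). -/
structure DiffBundle {C : Type u} [Category.{v} C] (D : TangentCat C) (E M : C) where
  q : E ⟶ M
  E2 : ChosenPB q q
  TE2 : PBLift D.T E2
  TE2n : ∀ n : ℕ, PBLift (fpow D.T n) E2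
  P : ChosenPB (D.p.app M) q
  TP : PBLift D.T P
  TPn : ∀ n : ℕ, PBLift (fpow D.T n) P
  addq : E2.P ⟶ E
  zeroq : M ⟶ E
  lam : E ⟶ D.T.obj E
  addq_q : addq ≫ q = E2.pr0 ≫ q
  zeroq_q : zeroq ≫ q = 𝟙 M
  addq_comm : ∀ {X : C} (f g : X ⟶ E) (h : f ≫ q = g ≫ q),
    E2.pair f g h ≫ addq = E2.pair g f h.symm ≫ addq
  addq_assoc : ∀ {X : C} (f g k : X ⟶ E)
    (h1 : f ≫ q = g ≫ q) (h2 : g ≫ q = k ≫ q)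
    (h3 : (E2.pair f g h1 ≫ addq) ≫ q = k ≫ q)
    (h4 : f ≫ q = (E2.pair g k h2 ≫ addq) ≫ q),
    E2.pair (E2.pair f g h1 ≫ addq) k h3 ≫ addq
      = E2.pair f (E2.pair g k h2 ≫ addq) h4 ≫ addq
  addq_zero : ∀ {X : C} (f : X ⟶ E) (h : f ≫ q = (f ≫ q ≫ zeroq) ≫ q),
    E2.pair f (f ≫ q ≫ zeroq) h ≫ addq = f
  lam_Tq : lam ≫ D.T.map q = q ≫ D.zero.app M
  lam_zero1 : zeroq ≫ lam = D.zero.app M ≫ D.T.map zeroq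
  lam_add1 : ∀ {X : C} (f g : X ⟶ E) (h : f ≫ q = g ≫ q),
    ∃ w : X ⟶ D.T.obj E2.P,
      w ≫ D.T.map E2.pr0 = f ≫ lam ∧ w ≫ D.T.map E2.pr1 = g ≫ lam ∧
      E2.pair f g h ≫ addq ≫ lam = w ≫ D.T.map addq
  lam_p : lam ≫ D.p.app E = q ≫ zeroq
  lam_zero2 : zeroq ≫ lam = zeroq ≫ D.zero.app E
  lam_add2 : ∀ {X : C} (f g : X ⟶ E) (h : f ≫ q = g ≫ q)
    (h' : (f ≫ lam) ≫ D.p.app E = (g ≫ lam) ≫ D.p.app E),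
    E2.pair f g h ≫ addq ≫ lam = (D.T2 E).pair (f ≫ lam) (g ≫ lam) h' ≫ D.add E
  lam_l : lam ≫ D.l.app E = lam ≫ D.T.map lam
  mu : E2.P ⟶ D.T.obj E
  mu_spec : ∃ w : E2.P ⟶ D.T.obj E2.P,
    w ≫ D.T.map E2.pr0 = E2.pr0 ≫ lam ∧
    w ≫ D.T.map E2.pr1 = E2.pr1 ≫ D.zero.app E ∧
    mu = w ≫ D.T.map addq
  muLift : ∀ {X : C} (f : X ⟶ D.T.obj E),
    f ≫ D.T.map q = f ≫ D.p.app E ≫ q ≫ D.zero.app M → (X ⟶ E2.P)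
  muLift_mu : ∀ {X : C} (f : X ⟶ D.T.obj E)
    (h : f ≫ D.T.map q = f ≫ D.p.app E ≫ q ≫ D.zero.app M),
    muLift f h ≫ mu = f
  muLift_q : ∀ {X : C} (f : X ⟶ D.T.obj E)
    (h : f ≫ D.T.map q = f ≫ D.p.app E ≫ q ≫ D.zero.app M),
    muLift f h ≫ E2.pr0 ≫ q = f ≫ D.p.app E ≫ q
  mu_mono : ∀ {X : C} (w w' : X ⟶ E2.P), w ≫ mu = w' ≫ mu → w = w'

/-- The bracketing operation `{f}` for a differential bundle. -/
noncomputable def DiffBundle.brk {D : TangentCat C} {E M : C} (B : DiffBundle D E M)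
    {X : C} (f : X ⟶ D.T.obj E) : X ⟶ E :=
  if h : f ≫ D.T.map B.q = f ≫ D.p.app E ≫ B.q ≫ D.zero.app M
  then B.muLift f h ≫ B.E2.pr0 else f ≫ D.p.app E

/-- Negatives for a differential bundle (the fibrewise group structure). -/
structure BundleNegatives {D : TangentCat C} {E M : C} (B : DiffBundle D E M) where
  neg : E ⟶ E
  neg_q : neg ≫ B.q = B.q
  neg_add : ∀ {X : C} (f : X ⟶ E) (h : f ≫ B.q = (f ≫ neg) ≫ B.q),
    B.E2.pair f (f ≫ neg) h ≫ B.addq = f ≫ B.q ≫ B.zeroq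

/-- Fibrewise sum of maps into `E` for the bundle addition `+_q`. -/
noncomputable def DiffBundle.qadd {D : TangentCat C} {E M : C} (B : DiffBundle D E M)
    {X : C} (f g : X ⟶ E) : X ⟶ E :=
  if h : f ≫ B.q = g ≫ B.q then B.E2.pair f g h ≫ B.addq else f

/-- Fibrewise difference of maps into `E` for the bundle addition `+_q`. -/
noncomputable def DiffBundle.qsub {D : TangentCat C} {E M : C} (B : DiffBundle D E M)
    (NB : BundleNegatives B) {X : C} (f g : X ⟶ E) : X ⟶ E :=
  B.qadd f (g ≫ NB.neg)

/-- The horizontal descent `U = ⟨T(q), p⟩ : T(E) ⟶ T(M) ×_M E`. -/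
def TangentCat.hdesc (D : TangentCat C) {E M : C} (q : E ⟶ M)
    (P : ChosenPB (D.p.app M) q) : D.T.obj E ⟶ P.P :=
  P.pair (D.T.map q) (D.p.app E) (by simpa using D.p.naturality q)

/-- A vertical connection on the differential bundle with projection `q` and
lift `lam`: a retraction `K` of `lam` with `Kq = pq`, `Kλ = ℓT(K)` and
`Kλ = T(λ)cT(K)` (equivalently, `(K,p)` and `(K,q)` are linear bundle
morphisms). -/
def IsVerticalConnection (D : TangentCat C) {E M : C} (q : E ⟶ M)
    (lam : E ⟶ D.T.obj E) (K : D.T.obj E ⟶ E) : Prop :=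
  lam ≫ K = 𝟙 E ∧
  K ≫ q = D.p.app E ≫ q ∧
  K ≫ lam = D.l.app E ≫ D.T.map K ∧
  K ≫ lam = D.T.map lam ≫ D.c.app E ≫ D.T.map K

/-- Flatness of a vertical connection: `cT(K)K = T(K)K`. -/
def IsFlat (D : TangentCat C) {E : C} (K : D.T.obj E ⟶ E) : Prop :=
  D.c.app E ≫ D.T.map K ≫ K = D.T.map K ≫ K

/-- A horizontal connection on the differential bundle with projection `q`,
lift `lam` and horizontal pullback `P = T(M) ×_M E`: a section `H` of the
horizontal descent `U = ⟨T(q),p⟩` with `Hℓ = (ℓ×0)T(H)` and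
`HT(λ)c = (0×λ)T(H)` (equivalently, `(H,1)` is linear into `p_E` and into
`T(𝗊)`). -/
def IsHorizontalConnection (D : TangentCat C) {E M : C} (q : E ⟶ M)
    (lam : E ⟶ D.T.obj E) (P : ChosenPB (D.p.app M) q)
    (H : P.P ⟶ D.T.obj E) : Prop :=
  H ≫ D.T.map q = P.pr0 ∧
  H ≫ D.p.app E = P.pr1 ∧
  (∃ w : P.P ⟶ D.T.obj P.P,
    w ≫ D.T.map P.pr0 = P.pr0 ≫ D.l.app M ∧
    w ≫ D.T.map P.pr1 = P.pr1 ≫ D.zero.app E ∧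
    H ≫ D.l.app E = w ≫ D.T.map H) ∧
  (∃ w : P.P ⟶ D.T.obj P.P,
    w ≫ D.T.map P.pr0 = P.pr0 ≫ D.zero.app (D.T.obj M) ∧
    w ≫ D.T.map P.pr1 = P.pr1 ≫ lam ∧
    H ≫ D.T.map lam ≫ D.c.app E = w ≫ D.T.map H)

/-- A (full) connection, in unbundled form: a vertical connection `K` and a
horizontal connection `H` with `HK = π₁q0_q` and `⟨K,p⟩μ + UH = 1`. -/
noncomputable def IsConnectionPair (D : TangentCat C) {E M : C} (q : E ⟶ M)
    (lam : E ⟶ D.T.obj E) (EP : ChosenPB q q) (zeroq : M ⟶ E)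
    (mu : EP.P ⟶ D.T.obj E) (P : ChosenPB (D.p.app M) q)
    (K : D.T.obj E ⟶ E) (H : P.P ⟶ D.T.obj E) : Prop :=
  IsVerticalConnection D q lam K ∧
  IsHorizontalConnection D q lam P H ∧
  H ≫ K = P.pr1 ≫ q ≫ zeroq ∧
  ∃ R : D.T.obj E ⟶ EP.P, R ≫ EP.pr0 = K ∧ R ≫ EP.pr1 = D.p.app E ∧
    D.hadd (R ≫ mu) (D.hdesc q P ≫ H) = 𝟙 (D.T.obj E)

/-- A connection on a differential bundle. -/
noncomputable def IsConnection {D : TangentCat C} {E M : C} (B : DiffBundle D E M)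
    (K : D.T.obj E ⟶ E) (H : B.P.P ⟶ D.T.obj E) : Prop :=
  IsConnectionPair D B.q B.lam B.E2 B.zeroq B.mu B.P K H

/-- A Finsler connection on a differential bundle. -/
def IsFinslerConnection {D : TangentCat C} {E M : C} (B : DiffBundle D E M)
    (R : D.T.obj E ⟶ B.E2.P) : Prop :=
  B.mu ≫ R = 𝟙 B.E2.P ∧
  R ≫ B.E2.pr1 = D.p.app E ∧
  R ≫ B.E2.pr0 ≫ B.lam = D.T.map B.lam ≫ D.c.app E ≫ D.T.map (R ≫ B.E2.pr0) ∧
  D.l.app E ≫ D.T.map (R ≫ B.E2.pr0) = R ≫ B.E2.pr0 ≫ B.lam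

/-- The covariant derivative `∇_K(w,s) = wT(s)K`. -/
def nabla (D : TangentCat C) {E M : C} (K : D.T.obj E ⟶ E)
    (w : M ⟶ D.T.obj M) (s : M ⟶ E) : M ⟶ E :=
  w ≫ D.T.map s ≫ K

/-- Auxiliary: a map with the components of a chosen-pullback pairing equals it. -/
theorem ChosenPB.pair_eq {A B Z : C} {f : A ⟶ Z} {g : B ⟶ Z} (PB : ChosenPB f g)
    {X : C} {w : X ⟶ PB.P} {u : X ⟶ A} {v : X ⟶ B} (h : u ≫ f = v ≫ g)
    (h0 : w ≫ PB.pr0 = u) (h1 : w ≫ PB.pr1 = v) : w = PB.pair u v h :=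
  PB.hom_ext _ _ (by rw [h0, PB.pair_pr0]) (by rw [h1, PB.pair_pr1])

/-- Auxiliary: pairings with equal components are equal. -/
theorem ChosenPB.pair_congr {A B Z : C} {f : A ⟶ Z} {g : B ⟶ Z} (PB : ChosenPB f g)
    {X : C} {u u' : X ⟶ A} {v v' : X ⟶ B} (hu : u = u') (hv : v = v')
    (h : u ≫ f = v ≫ g) (h' : u' ≫ f = v' ≫ g) :
    PB.pair u v h = PB.pair u' v' h' := by
  subst hu; subst hv; rfl

/-- Auxiliary: a map with the components of a lifted pairing equals it. -/
theorem PBLift.pair_eq {T : C ⥤ C} {A B Z : C} {f : A ⟶ Z} {g : B ⟶ Z} {PB : ChosenPB f g}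
    (L : PBLift T PB) {X : C} {w : X ⟶ T.obj PB.P} {u : X ⟶ T.obj A} {v : X ⟶ T.obj B}
    (h : u ≫ T.map f = v ≫ T.map g)
    (h0 : w ≫ T.map PB.pr0 = u) (h1 : w ≫ T.map PB.pr1 = v) : w = L.pair u v h :=
  L.hom_ext _ _ (by rw [h0, L.pair_pr0]) (by rw [h1, L.pair_pr1])

theorem fpow_two_obj (T : C ⥤ C) (X : C) : (fpow T 2).obj X = T.obj (T.obj X) := rfl

theorem fpow_two_map (T : C ⥤ C) {X Y : C} (f : X ⟶ Y) :
    (fpow T 2).map f = T.map (T.map f) := rfl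

/-- In a Cartesian tangent category, for any differential
object `A` (a differential bundle over the terminal object `1`), the principal
projection `p̂ : T(A) → A` — characterized by `⟨p̂, p⟩ : T(A) → A₂` being
inverse to the isomorphism `μ : A₂ → T(A)` — is a vertical connection on this
differential bundle, and moreover it is the unique vertical connection on it. -/
theorem stmt0 (D : TangentCat C) {A One : C}
    (hOne : IsTerminal One) (B : DiffBundle D A One)
    (phat : D.T.obj A ⟶ A) (R : D.T.obj A ⟶ B.E2.P)
    (hR0 : R ≫ B.E2.pr0 = phat) (hR1 : R ≫ B.E2.pr1 = D.p.app A)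
    (hinv1 : R ≫ B.mu = 𝟙 (D.T.obj A)) (hinv2 : B.mu ≫ R = 𝟙 B.E2.P) :
    IsVerticalConnection D B.q B.lam phat ∧
      ∀ K : D.T.obj A ⟶ A, IsVerticalConnection D B.q B.lam K → K = phat := by
  obtain ⟨w, hw0, hw1, hwmu⟩ := B.mu_spec
  have hOneQ : ∀ {X : C} (u v : X ⟶ One), u = v := fun u v => hOne.hom_ext u v
  have hq2 : ∀ {X : C} (u v : X ⟶ A), u ≫ B.q = v ≫ B.q := fun u v => hOneQ _ _
  have hpq : phat ≫ B.q = D.p.app A ≫ B.q := hOneQ _ _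
  -- `T(q) = p̂ ≫ q ≫ 0`
  have hmuTq : B.mu ≫ D.T.map B.q = B.E2.pr0 ≫ B.q ≫ D.zero.app One := by
    rw [hwmu, Category.assoc, ← D.T.map_comp, B.addq_q, D.T.map_comp, ← Category.assoc, hw0,
      Category.assoc, B.lam_Tq]
  have hTq : D.T.map B.q = phat ≫ B.q ≫ D.zero.app One := by
    have h1 : D.T.map B.q = R ≫ B.mu ≫ D.T.map B.q := by
      rw [← Category.assoc, hinv1, Category.id_comp]
    rw [h1, hmuTq, ← Category.assoc, hR0]
  have hTQ : ∀ {X : C} (u v : X ⟶ D.T.obj A),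
      u ≫ D.T.map B.q = v ≫ D.T.map B.q := by
    intro X u v
    calc u ≫ D.T.map B.q = ((u ≫ phat) ≫ B.q) ≫ D.zero.app One := by
          rw [hTq]; simp only [Category.assoc]
      _ = ((v ≫ phat) ≫ B.q) ≫ D.zero.app One := by
          rw [hOneQ ((u ≫ phat) ≫ B.q) ((v ≫ phat) ≫ B.q)]
      _ = v ≫ D.T.map B.q := by rw [hTq]; simp only [Category.assoc]
  have hT2Q : ∀ {X : C} (u v : X ⟶ (fpow D.T 2).obj A),
      u ≫ (fpow D.T 2).map B.q = v ≫ (fpow D.T 2).map B.q := by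
    intro X u v
    have h1 := congrArg D.T.map hTq
    rw [D.T.map_comp, D.T.map_comp] at h1
    show u ≫ D.T.map (D.T.map B.q) = v ≫ D.T.map (D.T.map B.q)
    calc u ≫ D.T.map (D.T.map B.q)
        = ((u ≫ D.T.map phat) ≫ D.T.map B.q) ≫ D.T.map (D.zero.app One) := by
          erw [h1]
          exact (Category.assoc u (D.T.map phat) (D.T.map B.q ≫ D.T.map (D.zero.app One))).symm.trans
            (Category.assoc (u ≫ D.T.map phat) (D.T.map B.q) (D.T.map (D.zero.app One))).symm
      _ = ((v ≫ D.T.map phat) ≫ D.T.map B.q) ≫ D.T.map (D.zero.app One) := by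
          rw [hTQ (u ≫ D.T.map phat) (v ≫ D.T.map phat)]
      _ = v ≫ D.T.map (D.T.map B.q) := by
          erw [h1]
          exact (Category.assoc (v ≫ D.T.map phat) (D.T.map B.q) (D.T.map (D.zero.app One))).trans
            (Category.assoc v (D.T.map phat) (D.T.map B.q ≫ D.T.map (D.zero.app One)))
  -- the pairing `ψ = ⟨p̂ λ, p 0⟩`
  have hpsiq := hTQ (phat ≫ B.lam) (D.p.app A ≫ D.zero.app A)
  have hRw : R ≫ w = B.TE2.pair (phat ≫ B.lam) (D.p.app A ≫ D.zero.app A) hpsiq :=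
    B.TE2.pair_eq hpsiq
      (by rw [Category.assoc, hw0, ← Category.assoc, hR0])
      (by rw [Category.assoc, hw1, ← Category.assoc, hR1])
  have hstar : B.TE2.pair (phat ≫ B.lam) (D.p.app A ≫ D.zero.app A) hpsiq ≫ D.T.map B.addq
      = 𝟙 (D.T.obj A) := by
    rw [← hRw, Category.assoc, ← hwmu, hinv1]
  have hmuphat : B.mu ≫ phat = B.E2.pr0 := by
    rw [← hR0, ← Category.assoc, hinv2, Category.id_comp]
  have hps0 := B.TE2.pair_pr0 (phat ≫ B.lam) (D.p.app A ≫ D.zero.app A) hpsiq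
  have hps1 := B.TE2.pair_pr1 (phat ≫ B.lam) (D.p.app A ≫ D.zero.app A) hpsiq
  -- key computation: `ψ ≫ T(μ) = ℓ`
  have hT2q' := hT2Q (phat ≫ B.lam ≫ D.T.map B.lam)
      (D.p.app A ≫ D.zero.app A ≫ D.T.map (D.zero.app A))
  have e1 : B.TE2.pair (phat ≫ B.lam) (D.p.app A ≫ D.zero.app A) hpsiq ≫ D.T.map w
      = (B.TE2n 2).pair (phat ≫ B.lam ≫ D.T.map B.lam)
          (D.p.app A ≫ D.zero.app A ≫ D.T.map (D.zero.app A)) hT2q' :=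
    (B.TE2n 2).pair_eq hT2q'
      (by
        show (B.TE2.pair (phat ≫ B.lam) (D.p.app A ≫ D.zero.app A) hpsiq ≫ D.T.map w)
            ≫ D.T.map (D.T.map B.E2.pr0) = _
        rw [Category.assoc, ← D.T.map_comp, hw0, D.T.map_comp, ← Category.assoc, hps0,
          Category.assoc]; rfl)
      (by
        show (B.TE2.pair (phat ≫ B.lam) (D.p.app A ≫ D.zero.app A) hpsiq ≫ D.T.map w)
            ≫ D.T.map (D.T.map B.E2.pr1) = _
        rw [Category.assoc, ← D.T.map_comp, hw1, D.T.map_comp, ← Category.assoc, hps1,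
          Category.assoc]; rfl)
  have e2 : B.TE2.pair (phat ≫ B.lam) (D.p.app A ≫ D.zero.app A) hpsiq ≫ D.l.app B.E2.P
      = (B.TE2n 2).pair (phat ≫ B.lam ≫ D.T.map B.lam)
          (D.p.app A ≫ D.zero.app A ≫ D.T.map (D.zero.app A)) hT2q' :=
    (B.TE2n 2).pair_eq hT2q'
      (by
        show (B.TE2.pair (phat ≫ B.lam) (D.p.app A ≫ D.zero.app A) hpsiq ≫ D.l.app B.E2.P)
            ≫ D.T.map (D.T.map B.E2.pr0) = _
        have hn := D.l.naturality B.E2.pr0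
        simp only [Functor.comp_map] at hn
        rw [Category.assoc, ← hn, ← Category.assoc, hps0, Category.assoc, B.lam_l]; rfl)
      (by
        show (B.TE2.pair (phat ≫ B.lam) (D.p.app A ≫ D.zero.app A) hpsiq ≫ D.l.app B.E2.P)
            ≫ D.T.map (D.T.map B.E2.pr1) = _
        have hn := D.l.naturality B.E2.pr1
        simp only [Functor.comp_map] at hn
        rw [Category.assoc, ← hn, ← Category.assoc, hps1, Category.assoc, D.l_zero]; rfl)
  have hlpsi : B.TE2.pair (phat ≫ B.lam) (D.p.app A ≫ D.zero.app A) hpsiq ≫ D.T.map B.mu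
      = D.l.app A := by
    have hn := D.l.naturality B.addq
    simp only [Functor.comp_map] at hn
    calc B.TE2.pair (phat ≫ B.lam) (D.p.app A ≫ D.zero.app A) hpsiq ≫ D.T.map B.mu
        = B.TE2.pair (phat ≫ B.lam) (D.p.app A ≫ D.zero.app A) hpsiq
            ≫ D.T.map w ≫ D.T.map (D.T.map B.addq) := by
          rw [hwmu, D.T.map_comp]
      _ = (B.TE2.pair (phat ≫ B.lam) (D.p.app A ≫ D.zero.app A) hpsiq ≫ D.l.app B.E2.P)
            ≫ D.T.map (D.T.map B.addq) := by
          rw [← Category.assoc, e1, ← e2]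
      _ = B.TE2.pair (phat ≫ B.lam) (D.p.app A ≫ D.zero.app A) hpsiq
            ≫ D.T.map B.addq ≫ D.l.app A := by
          rw [Category.assoc, ← hn]
      _ = D.l.app A := by rw [← Category.assoc, hstar, Category.id_comp]
  -- condition 3 for `p̂`
  have hc3 : phat ≫ B.lam = D.l.app A ≫ D.T.map phat := by
    rw [← hlpsi, Category.assoc, ← D.T.map_comp, hmuphat, hps0]
  -- `λ ≫ p̂ = 𝟙`
  obtain ⟨w1, h10, h11, h1e⟩ := B.lam_add1 (𝟙 A) (𝟙 A ≫ B.q ≫ B.zeroq) (hq2 _ _)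
  have hunit : B.E2.pair (𝟙 A) (𝟙 A ≫ B.q ≫ B.zeroq) (hq2 _ _) ≫ B.addq = 𝟙 A :=
    B.addq_zero (𝟙 A) (hq2 _ _)
  have hlamw : B.E2.pair (𝟙 A) (𝟙 A ≫ B.q ≫ B.zeroq) (hq2 _ _) ≫ w = w1 := by
    apply B.TE2.hom_ext
    · rw [Category.assoc, hw0, h10, ← Category.assoc, B.E2.pair_pr0]
    · rw [Category.assoc, hw1, h11, ← Category.assoc, B.E2.pair_pr1]
      simp only [Category.id_comp, Category.assoc]
      rw [show B.zeroq ≫ D.zero.app A = B.zeroq ≫ B.lam from B.lam_zero2.symm]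
  have hS1 : B.E2.pair (𝟙 A) (𝟙 A ≫ B.q ≫ B.zeroq) (hq2 _ _) ≫ B.mu = B.lam := by
    rw [hwmu, ← Category.assoc, hlamw, ← h1e, ← Category.assoc, hunit, Category.id_comp]
  have hlamphat : B.lam ≫ phat = 𝟙 A := by
    rw [← hS1, Category.assoc, hmuphat, B.E2.pair_pr0]
  -- `0 ≫ p̂ = q ≫ 0_q`
  have hZadd : B.E2.pair (B.q ≫ B.zeroq) (𝟙 A) (hq2 _ _) ≫ B.addq = 𝟙 A := by
    rw [B.addq_comm (B.q ≫ B.zeroq) (𝟙 A) (hq2 _ _),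
      B.E2.pair_congr rfl (Category.id_comp (B.q ≫ B.zeroq)).symm _ (hq2 _ _)]
    exact B.addq_zero (𝟙 A) (hq2 _ _)
  have hZmu : B.E2.pair (B.q ≫ B.zeroq) (𝟙 A) (hq2 _ _) ≫ B.mu = D.zero.app A := by
    have hzn0 := D.zero.naturality B.E2.pr0
    simp only [Functor.id_map, Functor.id_obj] at hzn0
    have hznA := D.zero.naturality B.addq
    simp only [Functor.id_map, Functor.id_obj] at hznA
    have hZw : B.E2.pair (B.q ≫ B.zeroq) (𝟙 A) (hq2 _ _) ≫ w
        = B.E2.pair (B.q ≫ B.zeroq) (𝟙 A) (hq2 _ _) ≫ D.zero.app B.E2.P := by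
      apply B.TE2.hom_ext
      · rw [Category.assoc, hw0, Category.assoc, ← hzn0, ← Category.assoc, ← Category.assoc,
          B.E2.pair_pr0]
        simp only [Category.assoc]
        rw [show B.zeroq ≫ B.lam = B.zeroq ≫ D.zero.app A from B.lam_zero2]
      · have hzn1 := D.zero.naturality B.E2.pr1
        simp only [Functor.id_map, Functor.id_obj] at hzn1
        rw [Category.assoc, hw1, Category.assoc, ← hzn1]
    calc B.E2.pair (B.q ≫ B.zeroq) (𝟙 A) (hq2 _ _) ≫ B.mu
        = (B.E2.pair (B.q ≫ B.zeroq) (𝟙 A) (hq2 _ _) ≫ w) ≫ D.T.map B.addq := by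
          rw [hwmu, Category.assoc]
      _ = B.E2.pair (B.q ≫ B.zeroq) (𝟙 A) (hq2 _ _)
            ≫ D.zero.app B.E2.P ≫ D.T.map B.addq := by rw [hZw, Category.assoc]
      _ = (B.E2.pair (B.q ≫ B.zeroq) (𝟙 A) (hq2 _ _) ≫ B.addq) ≫ D.zero.app A := by
          rw [← hznA]; simp only [Category.assoc]
      _ = D.zero.app A := by rw [hZadd, Category.id_comp]
  have hzR : D.zero.app A ≫ R = B.E2.pair (B.q ≫ B.zeroq) (𝟙 A) (hq2 _ _) := by
    apply B.mu_mono
    rw [Category.assoc, hinv1, Category.comp_id, hZmu]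
  have h0phat : D.zero.app A ≫ phat = B.q ≫ B.zeroq := by
    rw [← hR0, ← Category.assoc, hzR, B.E2.pair_pr0]
  -- auxiliary naturality facts
  have hTz : B.zeroq ≫ D.zero.app A = D.zero.app One ≫ D.T.map B.zeroq := by
    have h := D.zero.naturality B.zeroq
    simp only [Functor.id_map, Functor.id_obj] at h
    exact h
  have hzlam : D.zero.app A ≫ D.T.map B.lam = B.lam ≫ D.zero.app (D.T.obj A) := by
    have h := D.zero.naturality B.lam
    simp only [Functor.id_map, Functor.id_obj] at h
    exact h.symm
  -- the pairing `⟨pr0 λ, pr1 λ⟩` for `+_q ≫ λ`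
  have hP1 : B.E2.pair B.E2.pr0 B.E2.pr1 B.E2.comm = 𝟙 B.E2.P :=
    (B.E2.pair_eq B.E2.comm (Category.id_comp _) (Category.id_comp _)).symm
  have hlp : (B.E2.pr0 ≫ B.lam) ≫ D.p.app A = (B.E2.pr1 ≫ B.lam) ≫ D.p.app A := by
    simp only [Category.assoc, B.lam_p]
    rw [← Category.assoc, ← Category.assoc, B.E2.comm]
  have hAddLam : B.addq ≫ B.lam
      = (D.T2 A).pair (B.E2.pr0 ≫ B.lam) (B.E2.pr1 ≫ B.lam) hlp ≫ D.add A := by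
    have h := B.lam_add2 B.E2.pr0 B.E2.pr1 B.E2.comm hlp
    rw [hP1, Category.id_comp] at h
    exact h
  -- the chain lemma: `T(λ) ≫ c ≫ T(K) = p̂ ≫ λ`
  have hCH : ∀ K : D.T.obj A ⟶ A, B.lam ≫ K = 𝟙 A →
      K ≫ B.lam = D.l.app A ≫ D.T.map K → D.zero.app A ≫ K = B.q ≫ B.zeroq →
      D.T.map B.lam ≫ D.c.app A ≫ D.T.map K = phat ≫ B.lam := by
    intro K k1 k3 k0
    have huP : (phat ≫ B.lam ≫ D.T.map B.lam) ≫ D.T.map (D.p.app A)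
        = phat ≫ B.q ≫ B.zeroq ≫ D.zero.app A := by
      calc (phat ≫ B.lam ≫ D.T.map B.lam) ≫ D.T.map (D.p.app A)
          = phat ≫ B.lam ≫ D.T.map (B.lam ≫ D.p.app A) := by
            simp only [Category.assoc]; rw [← D.T.map_comp]
        _ = phat ≫ (B.lam ≫ D.T.map B.q) ≫ D.T.map B.zeroq := by
            rw [B.lam_p, D.T.map_comp]; simp only [Category.assoc]
        _ = phat ≫ B.q ≫ D.zero.app One ≫ D.T.map B.zeroq := by
            rw [B.lam_Tq]; simp only [Category.assoc]
        _ = phat ≫ B.q ≫ B.zeroq ≫ D.zero.app A := by rw [← hTz]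
    have hvP : (D.p.app A ≫ B.lam ≫ D.zero.app (D.T.obj A)) ≫ D.T.map (D.p.app A)
        = D.p.app A ≫ B.q ≫ B.zeroq ≫ D.zero.app A := by
      have hn := D.zero.naturality (D.p.app A)
      simp only [Functor.id_map, Functor.id_obj] at hn
      calc (D.p.app A ≫ B.lam ≫ D.zero.app (D.T.obj A)) ≫ D.T.map (D.p.app A)
          = D.p.app A ≫ B.lam ≫ D.zero.app (D.T.obj A) ≫ D.T.map (D.p.app A) := by
            simp only [Category.assoc]
        _ = D.p.app A ≫ (B.lam ≫ D.p.app A) ≫ D.zero.app A := by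
            rw [← hn]; simp only [Category.assoc]
        _ = D.p.app A ≫ B.q ≫ B.zeroq ≫ D.zero.app A := by
            rw [B.lam_p]; simp only [Category.assoc]
    have hUV : (phat ≫ B.lam ≫ D.T.map B.lam) ≫ D.T.map (D.p.app A)
        = (D.p.app A ≫ B.lam ≫ D.zero.app (D.T.obj A)) ≫ D.T.map (D.p.app A) := by
      rw [huP, hvP, reassoc_of% hpq]
    have hUV' : ((phat ≫ B.lam ≫ D.T.map B.lam) ≫ D.c.app A) ≫ D.p.app (D.T.obj A)
        = ((D.p.app A ≫ B.lam ≫ D.zero.app (D.T.obj A)) ≫ D.c.app A)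
            ≫ D.p.app (D.T.obj A) := by
      simp only [Category.assoc, D.c_p]
      simpa only [Category.assoc] using hUV
    obtain ⟨w2, hw20, hw21, hw2e⟩ := D.c_add A (phat ≫ B.lam ≫ D.T.map B.lam)
      (D.p.app A ≫ B.lam ≫ D.zero.app (D.T.obj A)) hUV hUV'
    have hw2 : B.TE2.pair (phat ≫ B.lam) (D.p.app A ≫ D.zero.app A) hpsiq
        ≫ D.T.map ((D.T2 A).pair (B.E2.pr0 ≫ B.lam) (B.E2.pr1 ≫ B.lam) hlp) = w2 := by
      apply (D.T2T A).hom_ext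
      · rw [hw20, Category.assoc, ← D.T.map_comp, (D.T2 A).pair_pr0, D.T.map_comp,
          ← Category.assoc, hps0, Category.assoc]
      · rw [hw21, Category.assoc, ← D.T.map_comp, (D.T2 A).pair_pr1, D.T.map_comp,
          ← Category.assoc, hps1, Category.assoc, hzlam]
    have hucK : ((phat ≫ B.lam ≫ D.T.map B.lam) ≫ D.c.app A) ≫ D.T.map K
        = phat ≫ B.lam := by
      calc ((phat ≫ B.lam ≫ D.T.map B.lam) ≫ D.c.app A) ≫ D.T.map K
          = phat ≫ (B.lam ≫ D.T.map B.lam) ≫ D.c.app A ≫ D.T.map K := by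
            simp only [Category.assoc]
        _ = phat ≫ (B.lam ≫ D.l.app A) ≫ D.c.app A ≫ D.T.map K := by rw [← B.lam_l]
        _ = phat ≫ B.lam ≫ (D.l.app A ≫ D.c.app A) ≫ D.T.map K := by
            simp only [Category.assoc]
        _ = phat ≫ B.lam ≫ D.l.app A ≫ D.T.map K := by rw [D.l_c]
        _ = phat ≫ B.lam ≫ K ≫ B.lam := by rw [← k3]
        _ = phat ≫ (B.lam ≫ K) ≫ B.lam := by simp only [Category.assoc]
        _ = phat ≫ B.lam := by rw [k1, Category.id_comp]
    have h0c : D.zero.app (D.T.obj A) ≫ D.c.app A = D.T.map (D.zero.app A) := by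
      rw [← D.c_zero A, Category.assoc, D.c_c, Category.comp_id]
    have hvcK : ((D.p.app A ≫ B.lam ≫ D.zero.app (D.T.obj A)) ≫ D.c.app A) ≫ D.T.map K
        = D.p.app A ≫ B.q ≫ B.zeroq ≫ D.zero.app A := by
      calc ((D.p.app A ≫ B.lam ≫ D.zero.app (D.T.obj A)) ≫ D.c.app A) ≫ D.T.map K
          = D.p.app A ≫ B.lam ≫ (D.zero.app (D.T.obj A) ≫ D.c.app A) ≫ D.T.map K := by
            simp only [Category.assoc]
        _ = D.p.app A ≫ B.lam ≫ D.T.map (D.zero.app A ≫ K) := by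
            rw [h0c, ← D.T.map_comp]
        _ = D.p.app A ≫ (B.lam ≫ D.T.map B.q) ≫ D.T.map B.zeroq := by
            rw [k0, D.T.map_comp]; simp only [Category.assoc]
        _ = D.p.app A ≫ B.q ≫ D.zero.app One ≫ D.T.map B.zeroq := by
            rw [B.lam_Tq]; simp only [Category.assoc]
        _ = D.p.app A ≫ B.q ≫ B.zeroq ≫ D.zero.app A := by rw [← hTz]
    have hKp : (((phat ≫ B.lam ≫ D.T.map B.lam) ≫ D.c.app A) ≫ D.T.map K) ≫ D.p.app A
        = (((D.p.app A ≫ B.lam ≫ D.zero.app (D.T.obj A)) ≫ D.c.app A) ≫ D.T.map K)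
            ≫ D.p.app A := by
      rw [hucK, hvcK]
      calc (phat ≫ B.lam) ≫ D.p.app A
          = phat ≫ B.q ≫ B.zeroq := by
            simp only [Category.assoc, B.lam_p]
        _ = D.p.app A ≫ B.q ≫ B.zeroq := by rw [reassoc_of% hpq]
        _ = (D.p.app A ≫ B.q ≫ B.zeroq ≫ D.zero.app A) ≫ D.p.app A := by
            simp only [Category.assoc, D.zero_p, Functor.id_obj, Category.comp_id]
    have hzz : (phat ≫ B.lam) ≫ D.p.app A
        = ((phat ≫ B.lam) ≫ D.p.app A ≫ D.zero.app A) ≫ D.p.app A := by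
      simp only [Category.assoc, D.zero_p, Functor.id_obj, Category.comp_id]
    have hEq : (phat ≫ B.lam) ≫ D.p.app A ≫ D.zero.app A
        = D.p.app A ≫ B.q ≫ B.zeroq ≫ D.zero.app A := by
      calc (phat ≫ B.lam) ≫ D.p.app A ≫ D.zero.app A
          = phat ≫ B.q ≫ B.zeroq ≫ D.zero.app A := by
            simp only [Category.assoc, reassoc_of% B.lam_p]
        _ = D.p.app A ≫ B.q ≫ B.zeroq ≫ D.zero.app A := by rw [reassoc_of% hpq]
    calc D.T.map B.lam ≫ D.c.app A ≫ D.T.map K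
        = (B.TE2.pair (phat ≫ B.lam) (D.p.app A ≫ D.zero.app A) hpsiq ≫ D.T.map B.addq)
            ≫ D.T.map B.lam ≫ D.c.app A ≫ D.T.map K := by
          rw [hstar, Category.id_comp]
      _ = (B.TE2.pair (phat ≫ B.lam) (D.p.app A ≫ D.zero.app A) hpsiq
            ≫ D.T.map ((D.T2 A).pair (B.E2.pr0 ≫ B.lam) (B.E2.pr1 ≫ B.lam) hlp))
            ≫ D.T.map (D.add A) ≫ D.c.app A ≫ D.T.map K := by
          have h' : D.T.map B.addq ≫ D.T.map B.lam
              = D.T.map ((D.T2 A).pair (B.E2.pr0 ≫ B.lam) (B.E2.pr1 ≫ B.lam) hlp)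
                ≫ D.T.map (D.add A) := by
            rw [← D.T.map_comp, ← D.T.map_comp, hAddLam]
          simp only [Category.assoc]
          rw [reassoc_of% h']
      _ = w2 ≫ D.T.map (D.add A) ≫ D.c.app A ≫ D.T.map K := by rw [hw2]
      _ = ((D.T2 (D.T.obj A)).pair ((phat ≫ B.lam ≫ D.T.map B.lam) ≫ D.c.app A)
            ((D.p.app A ≫ B.lam ≫ D.zero.app (D.T.obj A)) ≫ D.c.app A) hUV'
            ≫ D.add (D.T.obj A)) ≫ D.T.map K := by
          rw [reassoc_of% hw2e]; simp only [Category.assoc]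
      _ = (D.T2 A).pair
            ((((phat ≫ B.lam ≫ D.T.map B.lam) ≫ D.c.app A) ≫ D.T.map K))
            ((((D.p.app A ≫ B.lam ≫ D.zero.app (D.T.obj A)) ≫ D.c.app A) ≫ D.T.map K))
            hKp ≫ D.add A := by
          rw [Category.assoc, D.add_nat K _ _ hUV' hKp]
      _ = (D.T2 A).pair (phat ≫ B.lam)
            ((phat ≫ B.lam) ≫ D.p.app A ≫ D.zero.app A) hzz ≫ D.add A := by
          rw [(D.T2 A).pair_congr hucK (hvcK.trans hEq.symm) hKp hzz]
      _ = phat ≫ B.lam := D.add_zero' A (phat ≫ B.lam) hzz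
  -- condition 4 for `p̂`
  have hc4 : phat ≫ B.lam = D.T.map B.lam ≫ D.c.app A ≫ D.T.map phat :=
    (hCH phat hlamphat hc3 h0phat).symm
  refine ⟨⟨hlamphat, hpq, hc3, hc4⟩, ?_⟩
  -- uniqueness
  intro K hK
  obtain ⟨k1, k2, k3, k4⟩ := hK
  have k0 : D.zero.app A ≫ K = B.q ≫ B.zeroq := by
    have hzK := D.zero.naturality (D.zero.app A ≫ K)
    simp only [Functor.id_map, Functor.id_obj] at hzK
    have e1 : (D.zero.app A ≫ K) ≫ B.lam = (D.zero.app A ≫ K) ≫ D.zero.app A := by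
      calc (D.zero.app A ≫ K) ≫ B.lam = D.zero.app A ≫ K ≫ B.lam := by
            simp only [Category.assoc]
        _ = D.zero.app A ≫ D.l.app A ≫ D.T.map K := by rw [k3]
        _ = D.zero.app A ≫ D.T.map (D.zero.app A) ≫ D.T.map K := by
            rw [reassoc_of% (D.l_zero A)]
        _ = D.zero.app A ≫ D.T.map (D.zero.app A ≫ K) := by rw [← D.T.map_comp]
        _ = (D.zero.app A ≫ K) ≫ D.zero.app A := hzK.symm
    have e2 := congrArg (· ≫ D.p.app A) e1
    simp only [Category.assoc] at e2
    rw [B.lam_p, D.zero_p] at e2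
    simp only [Functor.id_obj, Category.comp_id] at e2
    have e3 : (D.zero.app A ≫ K) ≫ B.q = B.q := by
      rw [Category.assoc, k2, ← Category.assoc, D.zero_p]
      simp
    calc D.zero.app A ≫ K = D.zero.app A ≫ K ≫ B.q ≫ B.zeroq := e2.symm
      _ = ((D.zero.app A ≫ K) ≫ B.q) ≫ B.zeroq := by simp only [Category.assoc]
      _ = B.q ≫ B.zeroq := by rw [e3]
  have hKlam : K ≫ B.lam = phat ≫ B.lam := by
    rw [k4]; exact hCH K k1 k3 k0
  calc K = K ≫ 𝟙 A := (Category.comp_id K).symm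
    _ = K ≫ B.lam ≫ phat := by rw [← hlamphat]
    _ = (K ≫ B.lam) ≫ phat := by simp only [Category.assoc]
    _ = (phat ≫ B.lam) ≫ phat := by rw [hKlam]
    _ = phat ≫ 𝟙 A := by rw [Category.assoc, hlamphat]
    _ = phat := Category.comp_id phat
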